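/- Let n ≥ 1 and let f : ℝ^n → ℝ ∪ {+∞} be a proper lower semicontinuous convex function whose lower level set S_f := {x ∈ ℝ^n : f(x) ≤ 0} is nonempty. Then, as an equality in [0, +∞], Er(f) := inf{ f(x)/dist(x, S_f) : x ∈ ℝ^n, f(x) > 0 } = inf{ − inf_{‖h‖=1} d⁺f(x, h) : x ∈ dom f, f(x) > 0 }, where both infima over an empty index set are +∞ and the quotient f(x)/dist(x, S_f) is +∞ when f(x) = +∞. -/

import Mathlib

open Metric

lemma ereal_toReal_nonneg {x : EReal} (h : 0 ≤ x) : 0 ≤ x.toReal := by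
  rcases eq_or_ne x ⊤ with rfl | hx
  · simp
  · have := EReal.toReal_le_toReal h (by simp) hx
    simpa using this

lemma ekeland_descent {X : Type*} [MetricSpace X] [CompleteSpace X]
    (φ : X → EReal) (hlsc : LowerSemicontinuous φ) (hpos : ∀ x, 0 ≤ φ x)
    (c : ℝ) (hc : 0 < c)
    (H : ∀ u, φ u ≠ ⊤ → 0 < φ u → ∃ y, φ y + ((c * dist y u : ℝ) : EReal) ≤ φ u ∧ φ y < φ u)
    (x : X) (hx : φ x ≠ ⊤) :
    infDist x {y | φ y ≤ 0} ≤ (φ x).toReal / c := by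
  classical
  -- admissible set and value function
  set A : X → Set X := fun u => {y | φ y ≠ ⊤ ∧ (φ y).toReal + c * dist y u ≤ (φ u).toReal}
    with hA
  have hmemA : ∀ u, φ u ≠ ⊤ → u ∈ A u := by
    intro u hu
    refine ⟨hu, ?_⟩
    simp
  set v : X → ℝ := fun u => sInf ((fun y => (φ y).toReal) '' A u) with hv
  have hbdd : ∀ u, BddBelow ((fun y => (φ y).toReal) '' A u) := by
    intro u
    refine ⟨0, ?_⟩
    rintro r ⟨y, hy, rfl⟩
    exact ereal_toReal_nonneg (hpos y)
  have hv_nonneg : ∀ u, 0 ≤ v u := by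
    intro u
    rcases eq_or_ne (φ u) ⊤ with hu | hu
    · -- A u could be empty? no: if φ u = ⊤... A u membership doesn't need φ u ≠ ⊤. u ∈ A u? needs φ u ≠ ⊤.
      by_cases hne : ((fun y => (φ y).toReal) '' A u).Nonempty
      · exact le_csInf hne (by rintro r ⟨y, hy, rfl⟩; exact ereal_toReal_nonneg (hpos y))
      · rw [Set.not_nonempty_iff_eq_empty] at hne
        simp [hv, hne, Real.sInf_empty]
    · have hne : ((fun y => (φ y).toReal) '' A u).Nonempty :=
        ⟨(φ u).toReal, u, hmemA u hu, rfl⟩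
      exact le_csInf hne (by rintro r ⟨y, hy, rfl⟩; exact ereal_toReal_nonneg (hpos y))
  have hv_le : ∀ u, φ u ≠ ⊤ → v u ≤ (φ u).toReal := by
    intro u hu
    exact csInf_le (hbdd u) ⟨u, hmemA u hu, rfl⟩
  -- choice of nearly optimal descent point
  have step : ∀ u, φ u ≠ ⊤ → ∃ y, y ∈ A u ∧ (φ y).toReal ≤ (v u + (φ u).toReal) / 2 := by
    intro u hu
    rcases lt_or_eq_of_le (hv_le u hu) with hlt | heq
    · have hlt2 : v u < (v u + (φ u).toReal) / 2 := by linarith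
      have hne : ((fun y => (φ y).toReal) '' A u).Nonempty :=
        ⟨(φ u).toReal, u, hmemA u hu, rfl⟩
      obtain ⟨r, ⟨y, hy, rfl⟩, hr⟩ := exists_lt_of_csInf_lt hne hlt2
      exact ⟨y, hy, hr.le⟩
    · exact ⟨u, hmemA u hu, by rw [← heq]; linarith [hv_le u hu]⟩
  -- the iterated sequence
  let T : {p : X // φ p ≠ ⊤} → {p : X // φ p ≠ ⊤} :=
    fun p => ⟨(step p.1 p.2).choose, (step p.1 p.2).choose_spec.1.1⟩
  let s : ℕ → {p : X // φ p ≠ ⊤} := fun k => T^[k] ⟨x, hx⟩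
  have hs0 : (s 0).1 = x := rfl
  have hsucc : ∀ k, s (k + 1) = T (s k) := by
    intro k
    simp only [s, Function.iterate_succ_apply']
  set a : ℕ → ℝ := fun k => (φ (s k).1).toReal with ha
  have hmem : ∀ k, (s (k + 1)).1 ∈ A (s k).1 := by
    intro k
    show ((s (k+1)).1 : X) ∈ A (s k).1
    rw [hsucc k]
    exact (step (s k).1 (s k).2).choose_spec.1
  have hvk : ∀ k, a (k + 1) ≤ (v (s k).1 + a k) / 2 := by
    intro k
    show (φ (s (k+1)).1).toReal ≤ (v (s k).1 + (φ (s k).1).toReal) / 2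
    rw [hsucc k]
    exact (step (s k).1 (s k).2).choose_spec.2
  have ha_nonneg : ∀ k, 0 ≤ a k := fun k => ereal_toReal_nonneg (hpos _)
  have hstep : ∀ k, a (k + 1) + c * dist (s (k+1)).1 (s k).1 ≤ a k := fun k => (hmem k).2
  have ha_mono : ∀ k, a (k + 1) ≤ a k := by
    intro k
    have := hstep k
    nlinarith [dist_nonneg (x := (s (k+1)).1) (y := (s k).1), hc.le]
  have ha_anti : Antitone a := antitone_nat_of_succ_le ha_mono
  -- chain distance estimate
  have hchain : ∀ k m, k ≤ m → c * dist (s m).1 (s k).1 ≤ a k - a m := by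
    intro k m hkm
    induction m with
    | zero => simp_all
    | succ m ih =>
      rcases Nat.lt_or_ge k (m+1) with hk | hk
      · have hkm' : k ≤ m := Nat.lt_succ_iff.mp hk
        have h1 := ih hkm'
        have h2 := hstep m
        have := dist_triangle (s (m+1)).1 (s m).1 (s k).1
        nlinarith
      · have : k = m + 1 := le_antisymm hkm hk
        subst this
        simp
  -- limit of a
  obtain ⟨L, hL⟩ : ∃ L, Filter.Tendsto a Filter.atTop (nhds L) := by
    exact ⟨_, tendsto_atTop_ciInf ha_anti ⟨0, fun r ⟨k, hk⟩ => hk ▸ ha_nonneg k⟩⟩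
  have hL_le : ∀ k, L ≤ a k := fun k =>
    le_of_tendsto hL (Filter.eventually_atTop.2 ⟨k, fun m hm => ha_anti hm⟩)
  have hL_nonneg : 0 ≤ L := ge_of_tendsto hL (Filter.Eventually.of_forall ha_nonneg)
  -- Cauchy
  have hcauchy : CauchySeq (fun k => (s k).1) := by
    apply cauchySeq_of_le_tendsto_0 (fun k => (a k - L) / c)
    · intro p q N hp hq
      rcases le_total p q with h | h
      · have := hchain p q h
        have h2 := hL_le q
        have h3 := ha_anti hp
        rw [dist_comm]
        rw [le_div_iff₀ hc]
        nlinarith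
      · have := hchain q p h
        have h2 := hL_le p
        have h3 := ha_anti hq
        rw [le_div_iff₀ hc]
        nlinarith
    · have : Filter.Tendsto (fun k => (a k - L) / c) Filter.atTop (nhds ((L - L)/c)) :=
        ((hL.sub tendsto_const_nhds).div_const c)
      simpa using this
  obtain ⟨z, hz⟩ := cauchySeq_tendsto_of_complete hcauchy
  -- distance from x_k to z
  have hdz : ∀ k, c * dist z (s k).1 ≤ a k - L := by
    intro k
    have h1 : Filter.Tendsto (fun m => c * dist (s m).1 (s k).1) Filter.atTop
        (nhds (c * dist z (s k).1)) := (tendsto_const_nhds.mul ((hz.dist tendsto_const_nhds)))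
    have h2 : Filter.Tendsto (fun m => a k - a m) Filter.atTop (nhds (a k - L)) :=
      tendsto_const_nhds.sub hL
    exact le_of_tendsto_of_tendsto h1 h2
      (Filter.eventually_atTop.2 ⟨k, fun m hm => hchain k m hm⟩)
  -- lsc at z
  have hφz : φ z ≤ (L : EReal) := by
    by_contra hcon
    push_neg at hcon
    obtain ⟨b, hb1, hb2⟩ := EReal.exists_between_coe_real hcon
    have hev : ∀ᶠ k in Filter.atTop, (b : EReal) < φ (s k).1 :=
      hz.eventually (hlsc z (b : EReal) hb2)
    have hev2 : ∀ᶠ k in Filter.atTop, a k < b := by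
      have : Set.Iio b ∈ nhds L := Iio_mem_nhds (by exact_mod_cast hb1)
      exact hL.eventually this
    obtain ⟨k, hk1, hk2⟩ := (hev.and hev2).exists
    have : φ (s k).1 = ((a k : ℝ) : EReal) := (EReal.coe_toReal (s k).2
      (fun hbot => by simpa [hbot] using (hpos (s k).1))).symm
    rw [this] at hk1
    exact absurd (EReal.coe_lt_coe_iff.1 hk1) (not_lt.2 hk2.le)
  rcases le_or_gt (φ z) 0 with hz0 | hz0
  · -- z lands in the level set
    have hzS : z ∈ {y | φ y ≤ 0} := hz0
    have h1 : infDist x {y | φ y ≤ 0} ≤ dist x z := infDist_le_dist_of_mem hzS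
    have h2 : c * dist z x ≤ a 0 - L := by simpa [hs0] using hdz 0
    have ha0 : a 0 = (φ x).toReal := by rw [ha]; simp [hs0]
    rw [dist_comm] at h1
    rw [div_eq_inv_mul, ← ha0]
    calc infDist x {y | φ y ≤ 0} ≤ dist z x := h1
    _ ≤ (a 0 - L) / c := by
        rw [le_div_iff₀ hc]
        nlinarith [h2, mul_comm c (dist z x)]
    _ ≤ c⁻¹ * a 0 := by
        rw [div_eq_inv_mul]
        exact mul_le_mul_of_nonneg_left (by linarith) (inv_nonneg.2 hc.le)
  · -- contradiction with near-optimality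
    exfalso
    have hzT : φ z ≠ ⊤ := ne_top_of_le_ne_top (by simp) hφz
    obtain ⟨y, hy1, hy2⟩ := H z hzT hz0
    have hyT : φ y ≠ ⊤ := by
      intro h
      rw [h] at hy1
      have : (⊤ : EReal) + ((c * dist y z : ℝ) : EReal) = ⊤ :=
        EReal.top_add_of_ne_bot (EReal.coe_ne_bot _)
      rw [this] at hy1
      exact hzT (top_le_iff.1 hy1)
    have hybot : φ y ≠ ⊥ := fun h => by simpa [h] using (hpos y)
    have hzbot : φ z ≠ ⊥ := fun h => by simpa [h] using (hpos z)
    set b := (φ y).toReal with hb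
    have hy1' : b + c * dist y z ≤ (φ z).toReal := by
      have : ((b + c * dist y z : ℝ) : EReal) ≤ φ z := by
        rw [EReal.coe_add, EReal.coe_toReal hyT hybot]
        exact hy1
      have := EReal.toReal_le_toReal this (EReal.coe_ne_bot _) hzT
      rwa [EReal.toReal_coe] at this
    have hzL : (φ z).toReal ≤ L := by
      have := EReal.toReal_le_toReal hφz hzbot (by simp)
      simpa using this
    have hyz : y ≠ z := by
      intro h
      rw [h] at hy2
      exact lt_irrefl _ hy2
    have hbL : b < L := by
      have : 0 < dist y z := dist_pos.2 hyz
      nlinarith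
    -- y is admissible for every x_k
    have hyA : ∀ k, y ∈ A (s k).1 := by
      intro k
      refine ⟨hyT, ?_⟩
      have h1 := hdz k
      have h2 : dist y (s k).1 ≤ dist y z + dist z (s k).1 := dist_triangle _ _ _
      have : φ (s k).1 = ((a k : ℝ) : EReal) := (EReal.coe_toReal (s k).2
        (fun hbot => by simpa [hbot] using (hpos (s k).1))).symm
      rw [show (φ (s k).1).toReal = a k from rfl]
      nlinarith
    have hvb : ∀ k, v (s k).1 ≤ b := fun k => csInf_le (hbdd _) ⟨y, hyA k, rfl⟩
    -- v k ≥ 2 a (k+1) - a k  → limit L ≤ b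
    have hlow : ∀ k, 2 * a (k + 1) - a k ≤ b := by
      intro k
      have := hvk k
      have := hvb k
      linarith
    have : Filter.Tendsto (fun k => 2 * a (k + 1) - a k) Filter.atTop (nhds (2 * L - L)) :=
      ((hL.comp (Filter.tendsto_add_atTop_nat 1)).const_mul 2).sub hL
    have hLb : 2 * L - L ≤ b := le_of_tendsto this (Filter.Eventually.of_forall hlow)
    linarith


open scoped RealInnerProductSpace

/-- for a proper lsc convex function `f : ℝⁿ → ℝ ∪ {+∞}` with nonempty
lower level set `S_f = {x | f x ≤ 0}`, the global error bound modulus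
`Er(f) = inf { f x / dist(x, S_f) : f x > 0 }` equals
`inf { - inf_{‖h‖=1} d⁺f(x,h) : x ∈ dom f, f x > 0 }`, as an equality in `[0,+∞]`
(both infima over an empty index set being `+∞`, and the quotient being `+∞`
when `f x = +∞`).  Values are taken in `EReal`; `f` never takes the value `-∞`,
is somewhere finite (proper), lower semicontinuous and convex, and
`d⁺f(x,h) = inf_{t>0} (f(x+th) - f x)/t`. -/
theorem stmt4 (n : ℕ) (hn : 1 ≤ n) (f : EuclideanSpace ℝ (Fin n) → EReal)
    (hproper : ∃ x, f x ≠ ⊤) (hnotbot : ∀ x, f x ≠ ⊥)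
    (hlsc : LowerSemicontinuous f)
    (hconv : ∀ x y : EuclideanSpace ℝ (Fin n), ∀ t : ℝ, 0 < t → t < 1 →
      f (t • x + (1 - t) • y) ≤ (t : EReal) * f x + ((1 - t : ℝ) : EReal) * f y)
    (hS : {x : EuclideanSpace ℝ (Fin n) | f x ≤ 0}.Nonempty) :
    sInf {z : EReal | ∃ x : EuclideanSpace ℝ (Fin n), 0 < f x ∧
        z = f x / ((Metric.infDist x {y | f y ≤ 0} : ℝ) : EReal)} =
      sInf {z : EReal | ∃ x : EuclideanSpace ℝ (Fin n), f x ≠ ⊤ ∧ 0 < f x ∧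
        z = - sInf {w : EReal | ∃ h : EuclideanSpace ℝ (Fin n), ‖h‖ = 1 ∧
          w = sInf {v : EReal | ∃ t : ℝ, 0 < t ∧
            v = (f (x + t • h) - f x) / ((t : ℝ) : EReal)}}} := by
  classical
  set S : Set (EuclideanSpace ℝ (Fin n)) := {y | f y ≤ 0} with hSdef
  have hSclosed : IsClosed S := hlsc.isClosed_preimage 0
  have hdpos : ∀ x : EuclideanSpace ℝ (Fin n), 0 < f x → 0 < infDist x S := by
    intro x hx
    refine (hSclosed.notMem_iff_infDist_pos hS).1 ?_
    intro hmem
    exact absurd hx (not_lt.2 hmem)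
  apply le_antisymm
  · -- Er ≤ inf of slopes : easy direction via projection
    apply sInf_le_sInf_of_isCoinitialFor
    rintro z ⟨x, hxt, hx0, rfl⟩
    refine ⟨f x / ((infDist x S : ℝ) : EReal), ⟨x, hx0, rfl⟩, ?_⟩
    set d : ℝ := infDist x S with hddef
    have hd : 0 < d := hdpos x hx0
    obtain ⟨xb, hxbS, hdd⟩ := hSclosed.exists_infDist_eq_dist hS x
    set h : EuclideanSpace ℝ (Fin n) := (d⁻¹ : ℝ) • (xb - x) with hhdef
    have hnorm : ‖xb - x‖ = d := by
      rw [← dist_eq_norm, dist_comm, ← hdd]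
    have hh : ‖h‖ = 1 := by
      rw [hhdef, norm_smul, hnorm, norm_inv, Real.norm_eq_abs, abs_of_pos hd,
        inv_mul_cancel₀ hd.ne']
    have hxb : x + d • h = xb := by
      rw [hhdef, smul_smul, mul_inv_cancel₀ hd.ne', one_smul]
      abel
    have hinner : sInf {v : EReal | ∃ t : ℝ, 0 < t ∧
        v = (f (x + t • h) - f x) / ((t : ℝ) : EReal)} ≤ -(f x / ((d : ℝ) : EReal)) := by
      have hle : sInf {v : EReal | ∃ t : ℝ, 0 < t ∧
          v = (f (x + t • h) - f x) / ((t : ℝ) : EReal)} ≤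
          (f (x + d • h) - f x) / ((d : ℝ) : EReal) := sInf_le ⟨d, hd, rfl⟩
      rw [hxb] at hle
      refine hle.trans ?_
      have h1 : f xb - f x ≤ -(f x) := by
        have := EReal.sub_le_sub hxbS (le_refl (f x))
        calc f xb - f x ≤ 0 - f x := this
        _ = -(f x) := by
            show (0 : EReal) + -(f x) = -(f x)
            rw [zero_add]
      calc (f xb - f x) / ((d : ℝ) : EReal) ≤ (-(f x)) / ((d : ℝ) : EReal) :=
        EReal.div_le_div_right_of_nonneg (by exact_mod_cast hd.le) h1
      _ = -(f x / ((d : ℝ) : EReal)) := EReal.neg_mul _ _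
    have houter : sInf {w : EReal | ∃ h : EuclideanSpace ℝ (Fin n), ‖h‖ = 1 ∧
        w = sInf {v : EReal | ∃ t : ℝ, 0 < t ∧
          v = (f (x + t • h) - f x) / ((t : ℝ) : EReal)}} ≤ -(f x / ((d : ℝ) : EReal)) :=
      le_trans (sInf_le ⟨h, hh, rfl⟩) hinner
    exact EReal.le_neg_of_le_neg houter
  · -- hard direction
    refine le_sInf ?_
    rintro z ⟨x, hx0, rfl⟩
    set d : ℝ := infDist x S with hddef
    have hd : 0 < d := hdpos x hx0
    by_cases hxt : f x = ⊤
    · rw [hxt, EReal.top_div_of_pos_ne_top (by exact_mod_cast hd) (EReal.coe_ne_top d)]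
      exact le_top
    · set a : ℝ := (f x).toReal with hadef
      have hfa : f x = (a : EReal) := (EReal.coe_toReal hxt (hnotbot x)).symm
      have ha : 0 < a := by
        rw [hfa] at hx0
        exact_mod_cast hx0
      have hzform : f x / ((d : ℝ) : EReal) = ((a / d : ℝ) : EReal) := by
        rw [hfa, EReal.coe_div]
      rw [hzform]
      by_contra hcon
      have hcon' : ((a / d : ℝ) : EReal) < sInf {z : EReal | ∃ x : EuclideanSpace ℝ (Fin n),
          f x ≠ ⊤ ∧ 0 < f x ∧
          z = - sInf {w : EReal | ∃ h : EuclideanSpace ℝ (Fin n), ‖h‖ = 1 ∧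
            w = sInf {v : EReal | ∃ t : ℝ, 0 < t ∧
              v = (f (x + t • h) - f x) / ((t : ℝ) : EReal)}}} := lt_of_not_ge hcon
      obtain ⟨c, hc1, hc2⟩ := EReal.lt_iff_exists_real_btwn.1 hcon'
      have hcad : a / d < c := by exact_mod_cast hc1
      have hcpos : 0 < c := lt_of_le_of_lt (by positivity) hcad
      -- pointwise descent property for f
      have H0 : ∀ u : EuclideanSpace ℝ (Fin n), f u ≠ ⊤ → 0 < f u →
          ∃ y, f y + ((c * dist y u : ℝ) : EReal) < f u := by
        intro u hut hu0
        have hel : (- sInf {w : EReal | ∃ h : EuclideanSpace ℝ (Fin n), ‖h‖ = 1 ∧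
            w = sInf {v : EReal | ∃ t : ℝ, 0 < t ∧
              v = (f (u + t • h) - f u) / ((t : ℝ) : EReal)}}) ∈
            {z : EReal | ∃ x : EuclideanSpace ℝ (Fin n), f x ≠ ⊤ ∧ 0 < f x ∧
            z = - sInf {w : EReal | ∃ h : EuclideanSpace ℝ (Fin n), ‖h‖ = 1 ∧
              w = sInf {v : EReal | ∃ t : ℝ, 0 < t ∧
                v = (f (x + t • h) - f x) / ((t : ℝ) : EReal)}}} := ⟨u, hut, hu0, rfl⟩
        have hc3 : (c : EReal) < - sInf {w : EReal | ∃ h : EuclideanSpace ℝ (Fin n), ‖h‖ = 1 ∧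
            w = sInf {v : EReal | ∃ t : ℝ, 0 < t ∧
              v = (f (u + t • h) - f u) / ((t : ℝ) : EReal)}} :=
          lt_of_lt_of_le hc2 (sInf_le hel)
        have hc4 : sInf {w : EReal | ∃ h : EuclideanSpace ℝ (Fin n), ‖h‖ = 1 ∧
            w = sInf {v : EReal | ∃ t : ℝ, 0 < t ∧
              v = (f (u + t • h) - f u) / ((t : ℝ) : EReal)}} < ((-c : ℝ) : EReal) := by
          have h5 : -(-(sInf {w : EReal | ∃ h : EuclideanSpace ℝ (Fin n), ‖h‖ = 1 ∧
              w = sInf {v : EReal | ∃ t : ℝ, 0 < t ∧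
                v = (f (u + t • h) - f u) / ((t : ℝ) : EReal)}})) < -((c : ℝ) : EReal) :=
            EReal.neg_lt_neg_iff.mpr hc3
          rwa [neg_neg, ← EReal.coe_neg] at h5
        obtain ⟨w, ⟨h, hh, rfl⟩, hw⟩ := sInf_lt_iff.1 hc4
        obtain ⟨v, ⟨t, ht, rfl⟩, hv⟩ := sInf_lt_iff.1 hw
        -- convert the divided inequality
        have h2 : f (u + t • h) - f u < ((-(c * t) : ℝ) : EReal) := by
          by_contra hge
          push_neg at hge
          have hdiv : ((-c : ℝ) : EReal) ≤ (f (u + t • h) - f u) / ((t : ℝ) : EReal) := by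
            have e1 : ((-c : ℝ) : EReal) = ((-(c * t) : ℝ) : EReal) / ((t : ℝ) : EReal) := by
              rw [← EReal.coe_div]
              norm_cast
              field_simp
            rw [e1]
            exact EReal.div_le_div_right_of_nonneg (by exact_mod_cast ht.le) hge
          exact absurd hv (not_lt.2 hdiv)
        set au : ℝ := (f u).toReal with haudef
        have hfu : f u = (au : EReal) := (EReal.coe_toReal hut (hnotbot u)).symm
        have h3 : f (u + t • h) < ((au - c * t : ℝ) : EReal) := by
          have := (EReal.sub_lt_iff (Or.inl (hnotbot u)) (Or.inl hut)).1 h2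
          rw [hfu] at this
          rw [show ((au - c*t : ℝ) : EReal) = ((-(c*t) : ℝ) : EReal) + ((au : ℝ) : EReal) by
            rw [← EReal.coe_add]; ring_nf]
          exact this
        refine ⟨u + t • h, ?_⟩
        have hdist : dist (u + t • h) u = t := by
          rw [dist_eq_norm, add_sub_cancel_left, norm_smul, hh, Real.norm_eq_abs,
            abs_of_pos ht, mul_one]
        rw [hdist, hfu]
        calc f (u + t • h) + ((c * t : ℝ) : EReal)
            < ((au - c * t : ℝ) : EReal) + ((c * t : ℝ) : EReal) :=
              EReal.add_lt_add_right_coe h3 _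
        _ = ((au : ℝ) : EReal) := by rw [← EReal.coe_add]; ring_nf
      -- pass to the truncated function φ = max f 0
      set φ : EuclideanSpace ℝ (Fin n) → EReal := fun y => max (f y) 0 with hφdef
      have hφlsc : LowerSemicontinuous φ := by
        intro u y hy
        rcases lt_max_iff.mp hy with hcase | hcase
        · filter_upwards [hlsc u y hcase] with w hw using lt_max_iff.mpr (Or.inl hw)
        · exact Filter.Eventually.of_forall fun w => lt_max_iff.mpr (Or.inr hcase)
      have hφpos : ∀ u, 0 ≤ φ u := fun u => le_max_right _ _
      have Hφ : ∀ u, φ u ≠ ⊤ → 0 < φ u →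
          ∃ y, φ y + ((c * dist y u : ℝ) : EReal) ≤ φ u ∧ φ y < φ u := by
        intro u hut hu0
        have hfu0 : 0 < f u := by
          rcases lt_max_iff.mp hu0 with h | h
          · exact h
          · exact absurd h (lt_irrefl _)
        have hfut : f u ≠ ⊤ := by
          intro hcontra
          apply hut
          rw [hφdef]
          simp [hcontra]
        obtain ⟨y, hy⟩ := H0 u hfut hfu0
        have hfyt : f y ≠ ⊤ := by
          intro hcontra
          rw [hcontra, EReal.top_add_of_ne_bot (EReal.coe_ne_bot _)] at hy
          exact not_top_lt hy
        set α : ℝ := (f u).toReal with hαdef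
        set β : ℝ := (f y).toReal with hβdef
        have hfu : f u = (α : EReal) := (EReal.coe_toReal hfut (hnotbot u)).symm
        have hfy : f y = (β : EReal) := (EReal.coe_toReal hfyt (hnotbot y)).symm
        have hα : 0 < α := by rw [hfu] at hfu0; exact_mod_cast hfu0
        have hreal : β + c * dist y u < α := by
          rw [hfu, hfy, ← EReal.coe_add] at hy
          exact_mod_cast hy
        have hφu : φ u = (α : EReal) := by
          rw [hφdef]
          simp only [hfu]
          rw [max_eq_left]
          exact_mod_cast hα.le
        rcases lt_or_ge 0 (f y) with hy0 | hy0
        · -- f y still positive : direct step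
          have hφy : φ y = (β : EReal) := by
            rw [hφdef]; simp only [hfy]
            rw [max_eq_left]
            rw [hfy] at hy0
            exact_mod_cast (le_of_lt (by exact_mod_cast hy0))
          refine ⟨y, ?_, ?_⟩
          · rw [hφy, hφu, ← EReal.coe_add]
            exact_mod_cast hreal.le
          · rw [hφy, hφu]
            have : β < α := by nlinarith [dist_nonneg (x := y) (y := u), hcpos.le]
            exact_mod_cast this
        · -- f y ≤ 0 : jump into the level set via convexity
          have hβ0 : β ≤ 0 := by
            rw [hfy] at hy0
            exact_mod_cast hy0
          rcases eq_or_lt_of_le hβ0 with hβeq | hβlt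
          · -- β = 0 : y itself works
            have hφy : φ y = 0 := by
              rw [hφdef]; simp only [hfy]
              rw [max_eq_right]
              exact_mod_cast hβ0
            refine ⟨y, ?_, ?_⟩
            · rw [hφy, hφu, zero_add]
              have : c * dist y u ≤ α := by nlinarith
              exact_mod_cast this
            · rw [hφy, hφu]
              exact_mod_cast hα
          · -- β < 0 : move to the zero of the affine bound
            set s : ℝ := α / (α - β) with hsdef
            have hαβ : 0 < α - β := by linarith
            have hs0 : 0 < s := div_pos hα hαβ
            have hs1 : s < 1 := by
              rw [hsdef, div_lt_one hαβ]
              linarith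
            set zpt : EuclideanSpace ℝ (Fin n) := s • y + (1 - s) • u with hzdef
            have hconvz := hconv y u s hs0 hs1
            have hval : (s : EReal) * f y + ((1 - s : ℝ) : EReal) * f u = 0 := by
              rw [hfy, hfu, ← EReal.coe_mul, ← EReal.coe_mul, ← EReal.coe_add]
              have : s * β + (1 - s) * α = 0 := by
                rw [hsdef]
                field_simp
                ring
              rw [this, EReal.coe_zero]
            have hfz : f zpt ≤ 0 := by
              rw [hzdef]
              calc f (s • y + (1 - s) • u) ≤ (s : EReal) * f y + ((1 - s : ℝ) : EReal) * f u :=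
                hconvz
              _ = 0 := hval
            have hφz : φ zpt = 0 := by
              rw [hφdef]
              simp only
              rw [max_eq_right hfz]
            have hdistz : dist zpt u = s * dist y u := by
              rw [hzdef, dist_eq_norm]
              have : s • y + (1 - s) • u - u = s • (y - u) := by
                rw [smul_sub, sub_smul, one_smul]
                abel
              rw [this, norm_smul, Real.norm_eq_abs, abs_of_pos hs0, dist_eq_norm]
            refine ⟨zpt, ?_, ?_⟩
            · rw [hφz, hφu, zero_add, hdistz]
              have hkey : c * (s * dist y u) ≤ α := by
                have h1 : c * dist y u ≤ α - β := by linarith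
                have h2 : s * (α - β) = α := by
                  rw [hsdef]; field_simp
                nlinarith [hs0.le]
              exact_mod_cast hkey
            · rw [hφz, hφu]
              exact_mod_cast hα
      have hφxt : φ x ≠ ⊤ := by
        rw [hφdef]
        simp only [hfa]
        intro hcontra
        rcases max_cases ((a : EReal)) (0 : EReal) with ⟨heq, _⟩ | ⟨heq, _⟩ <;>
          rw [heq] at hcontra <;> simp at hcontra
      have hEK := ekeland_descent φ hφlsc hφpos c hcpos Hφ x hφxt
      have hsetEq : {y | φ y ≤ 0} = S := by
        ext y
        simp only [hφdef, Set.mem_setOf_eq, max_le_iff, le_refl, and_true, hSdef]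
      have hφx : (φ x).toReal = a := by
        rw [hφdef]
        simp only [hfa]
        rw [max_eq_left (by exact_mod_cast ha.le : (0:EReal) ≤ (a : EReal))]
        exact EReal.toReal_coe a
      rw [hsetEq, hφx] at hEK
      -- contradiction : d ≤ a / c but a / d < c
      have : a / c < d := by
        rw [div_lt_iff₀ hcpos]
        calc a = (a / d) * d := by field_simp
        _ < c * d := by exact mul_lt_mul_of_pos_right hcad hd
        _ = d * c := mul_comm c d
      linarith [hEK, this]
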